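/- arXiv:2209.00135 — 6 statements merged into one kernel-verified Lean document; each statement's English description precedes it below -/
import Mathlib

section
/- (Instability at τ = 0.) Let a₂, a₁, c be real numbers with a₁ < 0 and c > 0. Then the cubic λ³ + a₂λ² + a₁λ + c, viewed over ℂ, has exactly one root with negative real part and exactly two roots (counted with multiplicity) with positive real part; in particular it has no purely imaginary roots. (Applied with c = a₀ + b₀, this says that the undelayed characteristic polynomial W(λ) at τ = 0 with b₁ = b₂ = 0 has precisely two roots in the open right half-plane.) -/
open Polynomial

/-- Instability at τ = 0: For real a₂, a₁ < 0 and c > 0, the cubic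
λ³ + a₂λ² + a₁λ + c over ℂ has exactly one root with negative real part and
exactly two roots (with multiplicity) with positive real part; in particular no
purely imaginary roots. -/
theorem instability_at_zero_delay (a₂ a₁ c : ℝ) (ha₁ : a₁ < 0) (hc : 0 < c) :
    ∃ z₁ z₂ z₃ : ℂ,
      (Polynomial.X ^ 3 + Polynomial.C (a₂ : ℂ) * Polynomial.X ^ 2
        + Polynomial.C (a₁ : ℂ) * Polynomial.X + Polynomial.C (c : ℂ)).roots
        = {z₁, z₂, z₃}
      ∧ z₁.re < 0 ∧ 0 < z₂.re ∧ 0 < z₃.re := by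
  -- Step 1: real root r < 0
  obtain ⟨r, hrneg, hr⟩ : ∃ r : ℝ, r < 0 ∧ r^3 + a₂*r^2 + a₁*r + c = 0 := by
    set s : ℝ := 1 + |a₂| + |a₁| + c with hs
    have hs1 : 1 ≤ s := by
      have := abs_nonneg a₂; have := abs_nonneg a₁; simp [hs]; nlinarith
    have hfM : (-s)^3 + a₂*(-s)^2 + a₁*(-s) + c < 0 := by
      have h2 : a₂ ≤ |a₂| := le_abs_self a₂
      have h1 : -a₁ ≤ |a₁| := neg_le_abs a₁
      nlinarith [abs_nonneg a₂, abs_nonneg a₁, sq_nonneg s, le_abs_self a₂, neg_abs_le a₁,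
        mul_le_mul_of_nonneg_right h2 (sq_nonneg s)]
    have hcont : ContinuousOn (fun x : ℝ => x^3 + a₂*x^2 + a₁*x + c) (Set.Icc (-s) 0) := by
      fun_prop
    have hle : -s ≤ 0 := by linarith
    have := intermediate_value_Icc hle hcont
    have h0mem : (0:ℝ) ∈ Set.Icc ((-s)^3 + a₂*(-s)^2 + a₁*(-s) + c) ((0:ℝ)^3 + a₂*0^2 + a₁*0 + c) := by
      constructor <;> simp <;> nlinarith
    obtain ⟨r, hrmem, hfr⟩ := this h0mem
    refine ⟨r, ?_, hfr⟩
    rcases lt_or_eq_of_le hrmem.2 with h | h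
    · exact h
    · exfalso; rw [h] at hfr; simp at hfr; linarith
  -- quadratic cofactor data
  set b : ℝ := a₂ + r with hbdef
  set d : ℝ := a₁ + r * b with hddef
  have hd : 0 < d := by nlinarith
  have hb : b < 0 := by nlinarith
  set e : ℝ := b / 2 with hedef
  have he : e < 0 := by simp [hedef]; linarith
  set Δ : ℝ := e^2 - d with hΔdef
  set w : ℂ := if 0 ≤ Δ then ((Real.sqrt Δ : ℝ) : ℂ) else ((Real.sqrt (-Δ) : ℝ) : ℂ) * Complex.I with hwdef
  have hw2 : w^2 = ((Δ : ℝ) : ℂ) := by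
    rw [hwdef]
    split_ifs with h
    · rw [← Complex.ofReal_pow, Real.sq_sqrt h]
    · rw [mul_pow, Complex.I_sq, ← Complex.ofReal_pow, Real.sq_sqrt (by linarith)]
      push_cast; ring
  have hwre : |w.re| < -e := by
    rw [hwdef]
    split_ifs with h
    · simp only [Complex.ofReal_re]
      rw [abs_of_nonneg (Real.sqrt_nonneg _)]
      have : Δ < (-e)^2 := by simp [hΔdef]; nlinarith
      exact (Real.sqrt_lt' (by linarith)).2 this
    · simp [Complex.mul_re]; linarith
  refine ⟨(r:ℂ), -(e:ℂ) + w, -(e:ℂ) - w, ?_, by simpa using hrneg, ?_, ?_⟩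
  · -- roots
    have hmul : (-(e:ℂ) + w) * (-(e:ℂ) - w) = ((d:ℝ) : ℂ) := by
      have : (-(e:ℂ) + w) * (-(e:ℂ) - w) = (e:ℂ)^2 - w^2 := by ring
      rw [this, hw2, hΔdef]; push_cast; ring
    have hsum : (-(e:ℂ) + w) + (-(e:ℂ) - w) = -((b:ℝ) : ℂ) := by
      rw [hedef]; push_cast; ring
    have hP : (X ^ 3 + C (a₂ : ℂ) * X ^ 2 + C (a₁ : ℂ) * X + C (c : ℂ))
        = (X - C (r:ℂ)) * (X - C (-(e:ℂ) + w)) * (X - C (-(e:ℂ) - w)) := by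
      have h1 : (r:ℂ) + ((-(e:ℂ) + w) + (-(e:ℂ) - w)) = -(a₂:ℂ) := by
        rw [hsum, hbdef]; push_cast; ring
      have h2 : (r:ℂ) * ((-(e:ℂ) + w) + (-(e:ℂ) - w)) + (-(e:ℂ) + w) * (-(e:ℂ) - w) = (a₁:ℂ) := by
        rw [hsum, hmul, hddef]; push_cast; ring
      have h3r : r * d = -c := by rw [hddef, hbdef]; linear_combination hr
      have h3 : (r:ℂ) * ((-(e:ℂ) + w) * (-(e:ℂ) - w)) = -(c:ℂ) := by
        rw [hmul, ← Complex.ofReal_mul, h3r]; push_cast; ring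
      have expand : (X - C (r:ℂ)) * (X - C (-(e:ℂ) + w)) * (X - C (-(e:ℂ) - w))
          = X^3 - C ((r:ℂ) + ((-(e:ℂ) + w) + (-(e:ℂ) - w))) * X^2
            + C ((r:ℂ) * ((-(e:ℂ) + w) + (-(e:ℂ) - w)) + (-(e:ℂ) + w) * (-(e:ℂ) - w)) * X
            - C ((r:ℂ) * ((-(e:ℂ) + w) * (-(e:ℂ) - w))) := by
        simp only [map_add, map_mul, map_neg, map_sub]
        ring
      rw [expand, h1, h2, h3]
      simp only [map_neg]
      ring
    rw [hP, Polynomial.roots_mul, Polynomial.roots_mul, Polynomial.roots_X_sub_C,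
      Polynomial.roots_X_sub_C, Polynomial.roots_X_sub_C]
    · simp [Multiset.singleton_add]
    · exact mul_ne_zero (X_sub_C_ne_zero _) (X_sub_C_ne_zero _)
    · exact mul_ne_zero (mul_ne_zero (X_sub_C_ne_zero _) (X_sub_C_ne_zero _)) (X_sub_C_ne_zero _)
  · have := abs_lt.1 hwre
    simp [Complex.add_re, Complex.neg_re, Complex.ofReal_re]
    linarith [this.1]
  · have := abs_lt.1 hwre
    simp [Complex.sub_re, Complex.neg_re, Complex.ofReal_re]
    linarith [this.2]
end

section
/- (Theorem, geometric form.) Assume 0 > b₀ > −a₀, a₁ < 0, a₂ > a₁²/(2|b₀|), τ > 0 with |b₀|τ² < 2a₂, and that there exists ω̄ > 0 such that W_r(ω̄) < 0 and W_i(ω) > 0 for all ω ∈ (0, ω̄). Then W_r(0) = a₀ + b₀ > 0, W_i(0) = 0, and for every ω > 0 either W_i(ω) > 0 or W_r(ω) < 0; that is, the Mikhailov hodograph ω ↦ W(iω) starts on the positive real axis and never meets the closed fourth quadrant {x ≥ 0, y ≤ 0} for ω > 0. -/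
/-- Theorem, geometric form: Under the stated conditions the
Mikhailov hodograph ω ↦ W(iω) starts on the positive real axis and never meets
the closed fourth quadrant for ω > 0. -/
theorem hodograph_avoids_fourth_quadrant (a₀ a₁ a₂ b₀ τ : ℝ)
    (hb : b₀ < 0) (hba : -a₀ < b₀) (ha₁ : a₁ < 0)
    (ha₂ : a₁ ^ 2 / (2 * |b₀|) < a₂)
    (hτ : 0 < τ) (hτ2 : |b₀| * τ ^ 2 < 2 * a₂)
    (Wr Wi : ℝ → ℝ)
    (hWr : Wr = fun ω : ℝ => -a₂ * ω ^ 2 + a₀ + b₀ * Real.cos (ω * τ))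
    (hWi : Wi = fun ω : ℝ => -ω ^ 3 + a₁ * ω - b₀ * Real.sin (ω * τ))
    (hbar : ∃ ωbar : ℝ, 0 < ωbar ∧ Wr ωbar < 0 ∧
      ∀ ω : ℝ, 0 < ω → ω < ωbar → 0 < Wi ω) :
    Wr 0 = a₀ + b₀ ∧ 0 < a₀ + b₀ ∧ Wi 0 = 0 ∧
      ∀ ω : ℝ, 0 < ω → 0 < Wi ω ∨ Wr ω < 0 := by
  obtain ⟨ωbar, hωbar, hWrbar, hWipos⟩ := hbar
  have hb' : |b₀| = -b₀ := abs_of_neg hb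
  have hderiv : ∀ x : ℝ,
      HasDerivAt Wr (-a₂ * (2 * x) + b₀ * (-(Real.sin (x * τ)) * τ)) x := by
    intro x
    rw [hWr]
    have h1 : HasDerivAt (fun ω : ℝ => ω * τ) τ x := by
      simpa using (hasDerivAt_id x).mul_const τ
    have h2 : HasDerivAt (fun ω : ℝ => Real.cos (ω * τ))
        (-(Real.sin (x * τ)) * τ) x := by
        have := (Real.hasDerivAt_cos (x * τ)).comp x h1; exact this
    have h3 : HasDerivAt (fun ω : ℝ => -a₂ * ω ^ 2) (-a₂ * (2 * x)) x := by
      simpa using ((hasDerivAt_pow 2 x).const_mul (-a₂))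
    exact (h3.add_const a₀).add (h2.const_mul b₀)
  have hanti : StrictAntiOn Wr (Set.Ici 0) := by
    apply strictAntiOn_of_deriv_neg (convex_Ici 0)
    · exact fun x _ => (hderiv x).continuousAt.continuousWithinAt
    · intro x hx
      rw [interior_Ici] at hx
      rw [(hderiv x).deriv]
      have hs : |Real.sin (x * τ)| ≤ |x * τ| := Real.abs_sin_le_abs
      rw [abs_of_pos (mul_pos hx hτ)] at hs
      have h1 := abs_le.1 hs
      rw [hb'] at hτ2
      have key : 0 ≤ (-b₀ * τ) * (x * τ - Real.sin (x * τ)) :=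
        mul_nonneg (by nlinarith) (sub_nonneg.2 h1.2)
      have hx' : (0:ℝ) < x := hx
      nlinarith [mul_pos hx' (show (0:ℝ) < 2 * a₂ + b₀ * τ ^ 2 by nlinarith)]
  refine ⟨by simp [hWr], by linarith, by simp [hWi], ?_⟩
  intro ω hω
  rcases lt_or_ge ω ωbar with h | h
  · exact Or.inl (hWipos ω hω h)
  · right
    rcases eq_or_lt_of_le h with rfl | h'
    · exact hWrbar
    · exact lt_trans (hanti (le_of_lt hωbar) (le_of_lt hω) h') hWrbar
end

section
/- Assume a₁ < 0, b₀ < 0, τ ≥ 0 and |b₀|τ > |a₁|. Then for every ω > 0 with ω² < 6(|b₀|τ − |a₁|)/(|b₀|τ³ + 6) one has W_i(ω) > 0. (This follows from the lower bound W_i(ω) ≥ ω(|b₀|τ − |a₁| − ω²(|b₀|τ³ + 6)/6), obtained from sin x ≥ x − x³/6.) -/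
lemma sub_cube_div_six_le_sin {x : ℝ} (hx : 0 ≤ x) : x - x ^ 3 / 6 ≤ Real.sin x := by
  have hmono : Monotone (fun x : ℝ => Real.sin x - x + x ^ 3 / 6) := by
    apply monotone_of_deriv_nonneg
    · fun_prop
    · intro y
      have hd : deriv (fun x : ℝ => Real.sin x - x + x ^ 3 / 6) y
          = Real.cos y - 1 + y ^ 2 / 2 := by
        have : HasDerivAt (fun x : ℝ => Real.sin x - x + x ^ 3 / 6)
            (Real.cos y - 1 + 3 * y ^ 2 / 6) y := by
          have h1 := (Real.hasDerivAt_sin y).sub (hasDerivAt_id y)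
          have h2 := ((hasDerivAt_pow 3 y).div_const 6)
          exact (h1.add h2).congr_deriv (by norm_num)
        rw [this.deriv]; ring
      rw [hd]
      have := Real.one_sub_sq_div_two_le_cos (x := y)
      linarith
  have h0 : (fun x : ℝ => Real.sin x - x + x ^ 3 / 6) 0 ≤
      (fun x : ℝ => Real.sin x - x + x ^ 3 / 6) x := hmono hx
  simp at h0
  linarith

/-- If a₁ < 0, b₀ < 0, τ ≥ 0 and |b₀|τ > |a₁|, then W_i(ω) > 0 for
every ω > 0 with ω² < 6(|b₀|τ − |a₁|)/(|b₀|τ³ + 6). -/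
theorem Wi_pos_of_small_omega (a₀ a₁ a₂ b₀ τ : ℝ)
    (ha₁ : a₁ < 0) (hb : b₀ < 0) (hτ : 0 ≤ τ) (h : |a₁| < |b₀| * τ)
    (Wi : ℝ → ℝ)
    (hWi : Wi = fun ω : ℝ => -ω ^ 3 + a₁ * ω - b₀ * Real.sin (ω * τ)) :
    ∀ ω : ℝ, 0 < ω → ω ^ 2 < 6 * (|b₀| * τ - |a₁|) / (|b₀| * τ ^ 3 + 6) →
      0 < Wi ω := by
  intro ω hω hω2
  rw [hWi]
  have hb' : |b₀| = -b₀ := abs_of_neg hb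
  have ha' : |a₁| = -a₁ := abs_of_neg ha₁
  have hsin : ω * τ - (ω * τ) ^ 3 / 6 ≤ Real.sin (ω * τ) :=
    sub_cube_div_six_le_sin (by positivity)
  have hden : 0 < |b₀| * τ ^ 3 + 6 := by positivity
  have hkey : ω ^ 2 * (|b₀| * τ ^ 3 + 6) < 6 * (|b₀| * τ - |a₁|) :=
    (lt_div_iff₀ hden).mp hω2
  rw [hb', ha'] at hkey
  simp only
  nlinarith [mul_le_mul_of_nonneg_left hsin (neg_nonneg.mpr hb.le), hω.le,
    mul_pos hω (by nlinarith : (0:ℝ) < -b₀)]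
end

section
/- Assume b₀ < 0, a₀ > |b₀|, τ ≥ 0 and a₂ > |b₀|τ²/2. Then for every real ω with ω² > (a₀ − |b₀|)/(a₂ − |b₀|τ²/2) one has W_r(ω) < 0. (This follows from the upper bound W_r(ω) ≤ a₀ − |b₀| + ω²(|b₀|τ²/2 − a₂), obtained from cos x ≥ 1 − x²/2.) -/
/-- If b₀ < 0, a₀ > |b₀|, τ ≥ 0 and a₂ > |b₀|τ²/2, then
W_r(ω) < 0 for every real ω with ω² > (a₀ − |b₀|)/(a₂ − |b₀|τ²/2). -/
theorem Wr_neg_of_large_omega (a₀ a₁ a₂ b₀ τ : ℝ)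
    (hb : b₀ < 0) (ha₀ : |b₀| < a₀) (hτ : 0 ≤ τ) (ha₂ : |b₀| * τ ^ 2 / 2 < a₂)
    (Wr : ℝ → ℝ)
    (hWr : Wr = fun ω : ℝ => -a₂ * ω ^ 2 + a₀ + b₀ * Real.cos (ω * τ)) :
    ∀ ω : ℝ, (a₀ - |b₀|) / (a₂ - |b₀| * τ ^ 2 / 2) < ω ^ 2 → Wr ω < 0 := by
  intro ω hω
  subst hWr
  simp only
  have habs : |b₀| = -b₀ := abs_of_neg hb
  have hcos : 1 - (ω * τ) ^ 2 / 2 ≤ Real.cos (ω * τ) := Real.one_sub_sq_div_two_le_cos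
  have hden : 0 < a₂ - |b₀| * τ ^ 2 / 2 := by linarith
  have h2 : a₀ - |b₀| < ω ^ 2 * (a₂ - |b₀| * τ ^ 2 / 2) := (div_lt_iff₀ hden).mp hω
  nlinarith [mul_le_mul_of_nonpos_left hcos (le_of_lt hb), sq_nonneg ω, sq_nonneg (ω*τ)]
end

section
/- Assume b₀ < 0, τ ≥ 0 and a₂ > |b₀|τ²/2. Then the inequality 6(|b₀|τ − |a₁|)/(|b₀|τ³ + 6) > (a₀ − |b₀|)/(a₂ − |b₀|τ²/2) holds if and only if g(τ) < 0. -/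
/-- If b₀ < 0, τ ≥ 0 and a₂ > |b₀|τ²/2, then
6(|b₀|τ − |a₁|)/(|b₀|τ³ + 6) > (a₀ − |b₀|)/(a₂ − |b₀|τ²/2) iff g(τ) < 0. -/
theorem bounds_compat_iff_g_neg (a₀ a₁ a₂ b₀ τ : ℝ)
    (hb : b₀ < 0) (hτ : 0 ≤ τ) (ha₂ : |b₀| * τ ^ 2 / 2 < a₂)
    (g : ℝ → ℝ)
    (hg : g = fun t : ℝ => ((a₀ + 2 * |b₀|) / 6) * t ^ 3 - (|a₁| / 2) * t ^ 2
      - a₂ * t + (|a₁| * a₂ + a₀ - |b₀|) / |b₀|) :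
    (a₀ - |b₀|) / (a₂ - |b₀| * τ ^ 2 / 2)
        < 6 * (|b₀| * τ - |a₁|) / (|b₀| * τ ^ 3 + 6)
      ↔ g τ < 0 := by
  have hB : 0 < |b₀| := abs_pos.mpr (ne_of_lt hb)
  have h1 : 0 < a₂ - |b₀| * τ ^ 2 / 2 := by linarith
  have h2 : 0 < |b₀| * τ ^ 3 + 6 := by positivity
  have key : 6 * (|b₀| * g τ) =
      (a₀ - |b₀|) * (|b₀| * τ ^ 3 + 6)
        - 6 * (|b₀| * τ - |a₁|) * (a₂ - |b₀| * τ ^ 2 / 2) := by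
    rw [hg]
    field_simp
    ring
  rw [div_lt_div_iff₀ h1 h2]
  constructor
  · intro h
    have h6 : 6 * (|b₀| * g τ) < 0 := by linarith [key]
    nlinarith
  · intro h
    nlinarith [key]
end

section
/- (Remark.) Assume a₁ < 0, b₀ < 0 and τ ≥ 0. If there exists ω̄ > 0 such that W_i(ω) > 0 for all ω ∈ (0, ω̄), then τ > a₁/b₀ (note a₁/b₀ = |a₁|/|b₀| > 0). -/
/-- Remark: If a₁ < 0, b₀ < 0, τ ≥ 0 and W_i(ω) > 0 on some
nonempty interval (0, ω̄), then τ > a₁/b₀. -/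
theorem delay_lower_bound (a₀ a₁ a₂ b₀ τ : ℝ)
    (ha₁ : a₁ < 0) (hb : b₀ < 0) (hτ : 0 ≤ τ)
    (Wi : ℝ → ℝ)
    (hWi : Wi = fun ω : ℝ => -ω ^ 3 + a₁ * ω - b₀ * Real.sin (ω * τ))
    (hbar : ∃ ωbar : ℝ, 0 < ωbar ∧ ∀ ω : ℝ, 0 < ω → ω < ωbar → 0 < Wi ω) :
    a₁ / b₀ < τ := by
  obtain ⟨ωbar, hωbar, hpos⟩ := hbar
  set ω := ωbar / 2 with hωdef
  have hω : 0 < ω := by positivity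
  have hlt : ω < ωbar := by linarith
  have hW := hpos ω hω hlt
  rw [hWi] at hW
  simp only at hW
  have hsin : Real.sin (ω * τ) ≤ ω * τ := Real.sin_le (by positivity)
  have hmul : -b₀ * Real.sin (ω * τ) ≤ -b₀ * (ω * τ) :=
    mul_le_mul_of_nonneg_left hsin (by linarith)
  have h1 : 0 < -ω ^ 3 + a₁ * ω - b₀ * (ω * τ) := by nlinarith
  have h2 : b₀ * τ < a₁ := by nlinarith [pow_pos hω 3, sq_nonneg ω]
  rw [div_lt_iff_of_neg hb]
  linarith
end
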